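/- Let (H,K) be a match pair of finite groupoids and define κ on ℂT by κ(χ_{(k,h)}) = χ_{((k◁h)⁻¹, (k▷h)⁻¹)}. Then κ is an anti-automorphism of the vertical convolution algebra ℂT and κ² = id. -/
import Mathlib


/-- A (small) groupoid structure on a carrier type `G` of "arrows", with
source map `s`, range map `r`, partial multiplication `mul` (defined when
`s x = r y`) and inversion `inv`.  Units are identified with the elements
`s x`, `r x`. -/
structure Gpd (G : Type*) where
  s : G → G
  r : G → G
  mul : ∀ x y : G, s x = r y → G
  inv : G → G
  s_mul : ∀ x y h, s (mul x y h) = s y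
  r_mul : ∀ x y h, r (mul x y h) = r x
  s_inv : ∀ x, s (inv x) = r x
  r_inv : ∀ x, r (inv x) = s x
  s_s : ∀ x, s (s x) = s x
  r_s : ∀ x, r (s x) = s x
  s_r : ∀ x, s (r x) = r x
  r_r : ∀ x, r (r x) = r x
  mul_source : ∀ x (h : s x = r (s x)), mul x (s x) h = x
  range_mul : ∀ x (h : s (r x) = r x), mul (r x) x h = x
  mul_inv : ∀ x (h : s x = r (inv x)), mul x (inv x) h = r x
  inv_mul : ∀ x (h : s (inv x) = r x), mul (inv x) x h = s x
  mul_assoc : ∀ x y z (hxy : s x = r y) (hyz : s y = r z)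
      (h1 : s (mul x y hxy) = r z) (h2 : s x = r (mul y z hyz)),
      mul (mul x y hxy) z h1 = mul x (mul y z hyz) h2

namespace Gpd

variable {G : Type*} (𝒢 : Gpd G)

/-- The set of units `G⁰` of the groupoid. -/
def units : Set G := {u | 𝒢.r u = u}

/-- A wide subgroupoid: a subset closed under multiplication and inversion and
containing all units. -/
structure IsSubgpd (H : Set G) : Prop where
  mul_mem : ∀ x y (h : 𝒢.s x = 𝒢.r y), x ∈ H → y ∈ H → 𝒢.mul x y h ∈ H
  inv_mem : ∀ x, x ∈ H → 𝒢.inv x ∈ H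
  unit_mem : ∀ u, u ∈ 𝒢.units → u ∈ H

/-- A match pair of subgroupoids `H`, `K` of `G`, together with the projection
maps `p₁ : G → H`, `p₂ : G → K` of the unique factorization `g = p₁ g * p₂ g`. -/
structure MatchPair (H K : Set G) (p₁ p₂ : G → G) : Prop where
  subH : 𝒢.IsSubgpd H
  subK : 𝒢.IsSubgpd K
  inter : H ∩ K ⊆ 𝒢.units
  p₁_mem : ∀ g, p₁ g ∈ H
  p₂_mem : ∀ g, p₂ g ∈ K
  comp : ∀ g, 𝒢.s (p₁ g) = 𝒢.r (p₂ g)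
  decomp : ∀ g, g = 𝒢.mul (p₁ g) (p₂ g) (comp g)
  uniq : ∀ h, h ∈ H → ∀ k, k ∈ K → ∀ hc : 𝒢.s h = 𝒢.r k,
      p₁ (𝒢.mul h k hc) = h ∧ p₂ (𝒢.mul h k hc) = k

theorem MatchPair.s_p₂ {H K : Set G} {p₁ p₂ : G → G}
    (mp : 𝒢.MatchPair H K p₁ p₂) (g : G) : 𝒢.s (p₂ g) = 𝒢.s g := by
  conv_rhs => rw [mp.decomp g]
  rw [𝒢.s_mul]

theorem MatchPair.r_p₁ {H K : Set G} {p₁ p₂ : G → G}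
    (mp : 𝒢.MatchPair H K p₁ p₂) (g : G) : 𝒢.r (p₁ g) = 𝒢.r g := by
  conv_rhs => rw [mp.decomp g]
  rw [𝒢.r_mul]

/-- the left "action" `k ▷ h = p₁ (kh)` -/
def rAct (p₁ : G → G) (k h : G) (hc : 𝒢.s k = 𝒢.r h) : G := p₁ (𝒢.mul k h hc)

/-- the right "action" `k ◁ h = p₂ (kh)` -/
def lAct (p₂ : G → G) (k h : G) (hc : 𝒢.s k = 𝒢.r h) : G := p₂ (𝒢.mul k h hc)

end Gpd

namespace Gpd

noncomputable section
attribute [local instance] Classical.propDecidable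

variable {G : Type*} (𝒢 : Gpd G)

/-- The set `T = {(k,h) ∈ K × H : s k = r h}` indexing the basis of `ℂT`. -/
def Tset (H K : Set G) : Set (G × G) :=
  {p | p.1 ∈ K ∧ p.2 ∈ H ∧ 𝒢.s p.1 = 𝒢.r p.2}

variable [Fintype G] {H K : Set G}

/-- The vertical convolution product on `ℂT`:
`χ_{(k,h)} ⋆ χ_{(k',h')} = χ_{(k,hh')}` if `k' = k ◁ h` (and `h, h'`
composable), and `0` otherwise, extended bilinearly. -/
def conv (p₂ : G → G) (F F' : ↥(𝒢.Tset H K) → ℂ) : ↥(𝒢.Tset H K) → ℂ :=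
  fun t => ∑ t₁ : ↥(𝒢.Tset H K), ∑ t₂ : ↥(𝒢.Tset H K),
    if hd : 𝒢.s t₁.1.2 = 𝒢.r t₂.1.2 then
      (if t₂.1.1 = 𝒢.lAct p₂ t₁.1.1 t₁.1.2 t₁.prop.2.2 ∧
          t.1 = (t₁.1.1, 𝒢.mul t₁.1.2 t₂.1.2 hd) then F t₁ * F' t₂ else 0)
    else 0

end

end Gpd

namespace Gpd

noncomputable section
attribute [local instance] Classical.propDecidable

variable {G : Type*} (𝒢 : Gpd G) {H K : Set G} {p₁ p₂ : G → G}

/-- The map `(k,h) ↦ ((k◁h)⁻¹, (k▷h)⁻¹)` of `T` underlying the antipode `κ`. -/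
def kappaT (mp : 𝒢.MatchPair H K p₁ p₂) (t : ↥(𝒢.Tset H K)) : ↥(𝒢.Tset H K) :=
  ⟨(𝒢.inv (𝒢.lAct p₂ t.1.1 t.1.2 t.prop.2.2),
    𝒢.inv (𝒢.rAct p₁ t.1.1 t.1.2 t.prop.2.2)),
    ⟨mp.subK.inv_mem _ (mp.p₂_mem _), mp.subH.inv_mem _ (mp.p₁_mem _), by
      rw [𝒢.s_inv, 𝒢.r_inv]; exact (mp.comp _).symm⟩⟩


theorem mul_congr {x x' y y' : G} (hx : x = x') (hy : y = y')
    (h : 𝒢.s x = 𝒢.r y) (h' : 𝒢.s x' = 𝒢.r y') :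
    𝒢.mul x y h = 𝒢.mul x' y' h' := by subst hx; subst hy; rfl

theorem inv_unique (x z : G) (hc : 𝒢.s x = 𝒢.r z)
    (hm : 𝒢.mul x z hc = 𝒢.r x) : z = 𝒢.inv x := by
  calc z = 𝒢.mul (𝒢.r z) z (𝒢.s_r z) := (𝒢.range_mul z (𝒢.s_r z)).symm
    _ = 𝒢.mul (𝒢.mul (𝒢.inv x) x (𝒢.s_inv x)) z (by rw [𝒢.s_mul]; exact hc) :=
        𝒢.mul_congr (by rw [𝒢.inv_mul]; exact hc.symm) rfl _ _
    _ = 𝒢.mul (𝒢.inv x) (𝒢.mul x z hc) (by rw [𝒢.r_mul, 𝒢.s_inv]) :=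
        𝒢.mul_assoc _ _ _ _ _ _ _
    _ = 𝒢.mul (𝒢.inv x) (𝒢.s (𝒢.inv x)) (by rw [𝒢.r_s]) :=
        𝒢.mul_congr rfl (by rw [hm, 𝒢.s_inv]) _ _
    _ = 𝒢.inv x := 𝒢.mul_source _ _

theorem inv_inv' (x : G) : 𝒢.inv (𝒢.inv x) = x :=
  (𝒢.inv_unique (𝒢.inv x) x (𝒢.s_inv x) (by rw [𝒢.inv_mul, 𝒢.r_inv])).symm

theorem mul_inv_rev (x y : G) (hxy : 𝒢.s x = 𝒢.r y)
    (h' : 𝒢.s (𝒢.inv y) = 𝒢.r (𝒢.inv x)) :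
    𝒢.inv (𝒢.mul x y hxy) = 𝒢.mul (𝒢.inv y) (𝒢.inv x) h' := by
  have hc : 𝒢.s (𝒢.mul x y hxy) = 𝒢.r (𝒢.mul (𝒢.inv y) (𝒢.inv x) h') := by
    rw [𝒢.s_mul, 𝒢.r_mul, 𝒢.r_inv]
  refine (𝒢.inv_unique _ _ hc ?_).symm
  have e1 : 𝒢.mul (𝒢.r y) (𝒢.inv x) (by simp [𝒢.s_mul, 𝒢.r_mul, 𝒢.s_inv, 𝒢.r_inv, 𝒢.s_s, 𝒢.r_s, 𝒢.s_r, 𝒢.r_r, hxy]) = 𝒢.inv x := by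
    calc 𝒢.mul (𝒢.r y) (𝒢.inv x) _
        = 𝒢.mul (𝒢.r (𝒢.inv x)) (𝒢.inv x) (𝒢.s_r _) :=
          𝒢.mul_congr (by rw [𝒢.r_inv, hxy]) rfl _ _
      _ = 𝒢.inv x := 𝒢.range_mul _ _
  calc 𝒢.mul (𝒢.mul x y hxy) (𝒢.mul (𝒢.inv y) (𝒢.inv x) h') hc
      = 𝒢.mul x (𝒢.mul y (𝒢.mul (𝒢.inv y) (𝒢.inv x) h')
          (by simp [𝒢.s_mul, 𝒢.r_mul, 𝒢.s_inv, 𝒢.r_inv, 𝒢.s_s, 𝒢.r_s, 𝒢.s_r, 𝒢.r_r, hxy]))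
          (by simp [𝒢.s_mul, 𝒢.r_mul, 𝒢.s_inv, 𝒢.r_inv, 𝒢.s_s, 𝒢.r_s, 𝒢.s_r, 𝒢.r_r, hxy]) := 𝒢.mul_assoc _ _ _ _ _ _ _
    _ = 𝒢.mul x (𝒢.mul (𝒢.mul y (𝒢.inv y) (by rw [𝒢.r_inv])) (𝒢.inv x)
          (by simp [𝒢.s_mul, 𝒢.r_mul, 𝒢.s_inv, 𝒢.r_inv, 𝒢.s_s, 𝒢.r_s, 𝒢.s_r, 𝒢.r_r, hxy]))
          (by simp [𝒢.s_mul, 𝒢.r_mul, 𝒢.s_inv, 𝒢.r_inv, 𝒢.s_s, 𝒢.r_s, 𝒢.s_r, 𝒢.r_r, hxy]) :=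
        𝒢.mul_congr rfl (𝒢.mul_assoc _ _ _ _ _ _ _).symm _ _
    _ = 𝒢.mul x (𝒢.mul (𝒢.r y) (𝒢.inv x) (by simp [𝒢.s_mul, 𝒢.r_mul, 𝒢.s_inv, 𝒢.r_inv, 𝒢.s_s, 𝒢.r_s, 𝒢.s_r, 𝒢.r_r, hxy]))
          (by simp [𝒢.s_mul, 𝒢.r_mul, 𝒢.s_inv, 𝒢.r_inv, 𝒢.s_s, 𝒢.r_s, 𝒢.s_r, 𝒢.r_r, hxy]) :=
        𝒢.mul_congr rfl (𝒢.mul_congr (𝒢.mul_inv y _) rfl _ _) _ _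
    _ = 𝒢.mul x (𝒢.inv x) (by rw [𝒢.r_inv]) := 𝒢.mul_congr rfl e1 _ _
    _ = 𝒢.r x := 𝒢.mul_inv _ _
    _ = 𝒢.r (𝒢.mul x y hxy) := (𝒢.r_mul _ _ _).symm

theorem p_inv (mp : 𝒢.MatchPair H K p₁ p₂) (k h : G) (hk : k ∈ K) (hh : h ∈ H)
    (hc : 𝒢.s k = 𝒢.r h) :
    p₂ (𝒢.inv (𝒢.mul k h hc)) = 𝒢.inv k ∧ p₁ (𝒢.inv (𝒢.mul k h hc)) = 𝒢.inv h := by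
  have h' : 𝒢.s (𝒢.inv h) = 𝒢.r (𝒢.inv k) := by rw [𝒢.s_inv, 𝒢.r_inv]; exact hc.symm
  rw [𝒢.mul_inv_rev k h hc h']
  have := mp.uniq (𝒢.inv h) (mp.subH.inv_mem h hh) (𝒢.inv k) (mp.subK.inv_mem k hk) h'
  exact ⟨this.2, this.1⟩

theorem inv_decomp (mp : 𝒢.MatchPair H K p₁ p₂) (g : G)
    (h' : 𝒢.s (𝒢.inv (p₂ g)) = 𝒢.r (𝒢.inv (p₁ g))) :
    𝒢.mul (𝒢.inv (p₂ g)) (𝒢.inv (p₁ g)) h' = 𝒢.inv g := by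
  rw [← 𝒢.mul_inv_rev (p₁ g) (p₂ g) (mp.comp g) h', ← mp.decomp g]

theorem act_comp (mp : 𝒢.MatchPair H K p₁ p₂) (k h h' : G)
    (hc1 : 𝒢.s k = 𝒢.r h) (hc2 : 𝒢.s h = 𝒢.r h')
    (hcA : 𝒢.s k = 𝒢.r (𝒢.mul h h' hc2))
    (hcB : 𝒢.s (p₂ (𝒢.mul k h hc1)) = 𝒢.r h')
    (hcC : 𝒢.s (p₁ (𝒢.mul k h hc1)) = 𝒢.r (p₁ (𝒢.mul (p₂ (𝒢.mul k h hc1)) h' hcB))) :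
    p₁ (𝒢.mul k (𝒢.mul h h' hc2) hcA) =
      𝒢.mul (p₁ (𝒢.mul k h hc1)) (p₁ (𝒢.mul (p₂ (𝒢.mul k h hc1)) h' hcB)) hcC ∧
    p₂ (𝒢.mul k (𝒢.mul h h' hc2) hcA) = p₂ (𝒢.mul (p₂ (𝒢.mul k h hc1)) h' hcB) := by
  have hcD : 𝒢.s (𝒢.mul (p₁ (𝒢.mul k h hc1)) (p₁ (𝒢.mul (p₂ (𝒢.mul k h hc1)) h' hcB)) hcC)
      = 𝒢.r (p₂ (𝒢.mul (p₂ (𝒢.mul k h hc1)) h' hcB)) := by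
    rw [𝒢.s_mul]; exact mp.comp _
  have key : 𝒢.mul k (𝒢.mul h h' hc2) hcA =
      𝒢.mul (𝒢.mul (p₁ (𝒢.mul k h hc1)) (p₁ (𝒢.mul (p₂ (𝒢.mul k h hc1)) h' hcB)) hcC)
        (p₂ (𝒢.mul (p₂ (𝒢.mul k h hc1)) h' hcB)) hcD := by
    calc 𝒢.mul k (𝒢.mul h h' hc2) hcA
        = 𝒢.mul (𝒢.mul k h hc1) h' (by rw [𝒢.s_mul]; exact hc2) :=
          (𝒢.mul_assoc _ _ _ _ _ _ _).symm
      _ = 𝒢.mul (𝒢.mul (p₁ (𝒢.mul k h hc1)) (p₂ (𝒢.mul k h hc1)) (mp.comp _)) h'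
            (by rw [𝒢.s_mul]; exact hcB) :=
          𝒢.mul_congr (mp.decomp _) rfl _ _
      _ = 𝒢.mul (p₁ (𝒢.mul k h hc1)) (𝒢.mul (p₂ (𝒢.mul k h hc1)) h' hcB)
            (by rw [𝒢.r_mul]; exact mp.comp _) := 𝒢.mul_assoc _ _ _ _ _ _ _
      _ = 𝒢.mul (p₁ (𝒢.mul k h hc1))
            (𝒢.mul (p₁ (𝒢.mul (p₂ (𝒢.mul k h hc1)) h' hcB))
              (p₂ (𝒢.mul (p₂ (𝒢.mul k h hc1)) h' hcB)) (mp.comp _))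
            (by rw [𝒢.r_mul]; exact hcC) :=
          𝒢.mul_congr rfl (mp.decomp _) _ _
      _ = 𝒢.mul (𝒢.mul (p₁ (𝒢.mul k h hc1)) (p₁ (𝒢.mul (p₂ (𝒢.mul k h hc1)) h' hcB)) hcC)
            (p₂ (𝒢.mul (p₂ (𝒢.mul k h hc1)) h' hcB)) hcD :=
          (𝒢.mul_assoc _ _ _ _ _ _ _).symm
  rw [key]
  have hmem : 𝒢.mul (p₁ (𝒢.mul k h hc1)) (p₁ (𝒢.mul (p₂ (𝒢.mul k h hc1)) h' hcB)) hcC ∈ H :=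
    mp.subH.mul_mem _ _ _ (mp.p₁_mem _) (mp.p₁_mem _)
  exact mp.uniq _ hmem _ (mp.p₂_mem _) hcD

theorem kappa_invol (mp : 𝒢.MatchPair H K p₁ p₂) (t : ↥(𝒢.Tset H K)) :
    𝒢.kappaT mp (𝒢.kappaT mp t) = t := by
  obtain ⟨⟨k, h⟩, hk, hh, hc⟩ := t
  apply Subtype.ext
  simp only [kappaT, lAct, rAct]
  rw [𝒢.inv_decomp mp (𝒢.mul k h hc)]
  rw [(𝒢.p_inv mp k h hk hh hc).1, (𝒢.p_inv mp k h hk hh hc).2, 𝒢.inv_inv', 𝒢.inv_inv']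

/-- The vertical convolution pairing condition. -/
def Cnd (u a b : ↥(𝒢.Tset H K)) : Prop :=
  ∃ hd : 𝒢.s a.1.2 = 𝒢.r b.1.2,
    b.1.1 = 𝒢.lAct p₂ a.1.1 a.1.2 a.prop.2.2 ∧
    u.1 = (a.1.1, 𝒢.mul a.1.2 b.1.2 hd)

theorem dite_ite_eq {c : Prop} {A : c → Prop} (x : ℂ) {Q : Prop} [Decidable c]
    [∀ h, Decidable (A h)] [Decidable Q] (hQ : Q ↔ ∃ h : c, A h) :
    (if hd : c then (if A hd then x else 0) else 0) = if Q then x else 0 := by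
  by_cases hq : Q
  · obtain ⟨hd, hA⟩ := hQ.mp hq
    rw [dif_pos hd, if_pos hA, if_pos hq]
  · rw [if_neg hq]
    by_cases hd : c
    · rw [dif_pos hd, if_neg]
      intro hA
      exact hq (hQ.mpr ⟨hd, hA⟩)
    · rw [dif_neg hd]

theorem cnd_kappa (mp : 𝒢.MatchPair H K p₁ p₂) (u a b : ↥(𝒢.Tset H K))
    (hC : 𝒢.Cnd (p₂ := p₂) u a b) :
    𝒢.Cnd (p₂ := p₂) (𝒢.kappaT mp u) (𝒢.kappaT mp b) (𝒢.kappaT mp a) := by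
  obtain ⟨hd, h1, h2⟩ := hC
  obtain ⟨⟨k₁, h₁⟩, pa⟩ := a
  obtain ⟨⟨k₂, h₂⟩, pb⟩ := b
  simp only at hd h1 h2
  obtain ⟨hk₁, hh₁, hc₁⟩ := pa
  obtain ⟨hk₂, hh₂, hc₂⟩ := pb
  simp only [lAct] at h1
  -- u is determined
  have hu : u = ⟨(k₁, 𝒢.mul h₁ h₂ hd), by
      refine ⟨hk₁, mp.subH.mul_mem _ _ _ hh₁ hh₂, ?_⟩
      rw [𝒢.r_mul]; exact hc₁⟩ := Subtype.ext h2
  subst hu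
  -- abbreviations
  have hcB : 𝒢.s (p₂ (𝒢.mul k₁ h₁ hc₁)) = 𝒢.r h₂ := by
    rw [mp.s_p₂, 𝒢.s_mul]; exact hd
  have hcC : 𝒢.s (p₁ (𝒢.mul k₁ h₁ hc₁)) =
      𝒢.r (p₁ (𝒢.mul (p₂ (𝒢.mul k₁ h₁ hc₁)) h₂ hcB)) := by
    rw [mp.r_p₁, 𝒢.r_mul, mp.comp]
  have hac := 𝒢.act_comp mp k₁ h₁ h₂ hc₁ hd (by rw [𝒢.r_mul]; exact hc₁) hcB hcC
  -- rewrite (k₂, h₂) products in terms of p₂ (k₁ h₁)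
  have hmul2 : 𝒢.mul k₂ h₂ hc₂ = 𝒢.mul (p₂ (𝒢.mul k₁ h₁ hc₁)) h₂ hcB :=
    𝒢.mul_congr h1 rfl _ _
  refine ⟨?_, ?_, ?_⟩
  · -- composability
    simp only [kappaT, lAct, rAct, 𝒢.s_inv, 𝒢.r_inv]
    rw [mp.r_p₁, 𝒢.r_mul, h1]
    exact (mp.comp _).symm
  · -- the lAct condition
    simp only [kappaT, lAct, rAct]
    rw [𝒢.inv_decomp mp (𝒢.mul k₂ h₂ hc₂), (𝒢.p_inv mp k₂ h₂ hk₂ hh₂ hc₂).1, h1]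
  · -- the product condition
    simp only [kappaT, lAct, rAct]
    refine Prod.ext ?_ ?_
    · exact congrArg 𝒢.inv (hac.2.trans (congrArg p₂ hmul2.symm))
    · show 𝒢.inv (p₁ (𝒢.mul k₁ (𝒢.mul h₁ h₂ hd) _)) = _
      have hd'' : 𝒢.s (𝒢.inv (p₁ (𝒢.mul (p₂ (𝒢.mul k₁ h₁ hc₁)) h₂ hcB))) =
          𝒢.r (𝒢.inv (p₁ (𝒢.mul k₁ h₁ hc₁))) := by
        rw [𝒢.s_inv, 𝒢.r_inv]; exact hcC.symm
      rw [hac.1, 𝒢.mul_inv_rev _ _ hcC hd'']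
      exact 𝒢.mul_congr (congrArg (fun z => 𝒢.inv (p₁ z)) hmul2.symm) rfl _ _


variable [Fintype G]

/-- `κ(χ_{(k,h)}) = χ_{((k◁h)⁻¹,(k▷h)⁻¹)}` defines an
anti-automorphism of the vertical convolution algebra `ℂT` with `κ² = id`. -/
theorem stmt11 (mp : 𝒢.MatchPair H K p₁ p₂) :
    (∀ t : ↥(𝒢.Tset H K), 𝒢.kappaT mp (𝒢.kappaT mp t) = t) ∧
    (∀ F F' : ↥(𝒢.Tset H K) → ℂ,
      (fun t => 𝒢.conv p₂ F F' (𝒢.kappaT mp t)) =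
        𝒢.conv p₂ (fun t => F' (𝒢.kappaT mp t)) (fun t => F (𝒢.kappaT mp t))) := by
  have invol := 𝒢.kappa_invol mp
  refine ⟨invol, ?_⟩
  intro F F'
  funext t
  have reindex : ∀ f : ↥(𝒢.Tset H K) → ↥(𝒢.Tset H K) → ℂ,
      ∑ a, ∑ b, f a b = ∑ a, ∑ b, f (𝒢.kappaT mp b) (𝒢.kappaT mp a) := by
    intro f
    calc ∑ a, ∑ b, f a b = ∑ a, ∑ b, f b a := Finset.sum_comm
      _ = ∑ a, ∑ b, f (𝒢.kappaT mp b) a :=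
          Finset.sum_congr rfl fun a _ =>
            (Equiv.sum_comp ⟨𝒢.kappaT mp, 𝒢.kappaT mp, invol, invol⟩
              (fun b => f b a)).symm
      _ = ∑ a, ∑ b, f (𝒢.kappaT mp b) (𝒢.kappaT mp a) :=
          (Equiv.sum_comp ⟨𝒢.kappaT mp, 𝒢.kappaT mp, invol, invol⟩
            (fun a => ∑ b, f (𝒢.kappaT mp b) a)).symm
  have hiff : ∀ t₁ t₂ : ↥(𝒢.Tset H K),
      𝒢.Cnd (p₂ := p₂) (𝒢.kappaT mp t) t₁ t₂ ↔
        𝒢.Cnd (p₂ := p₂) t (𝒢.kappaT mp t₂) (𝒢.kappaT mp t₁) := by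
    intro t₁ t₂
    constructor
    · intro hC
      have := 𝒢.cnd_kappa mp _ _ _ hC
      rwa [invol] at this
    · intro hC
      have := 𝒢.cnd_kappa mp _ _ _ hC
      simp only [invol] at this
      exact this
  have lhs_eq : 𝒢.conv p₂ F F' (𝒢.kappaT mp t) =
      ∑ t₁, ∑ t₂, (if 𝒢.Cnd (p₂ := p₂) (𝒢.kappaT mp t) t₁ t₂ then F t₁ * F' t₂ else 0) := by
    refine Finset.sum_congr rfl fun t₁ _ => Finset.sum_congr rfl fun t₂ _ => ?_
    exact dite_ite_eq _ Iff.rfl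
  have rhs_eq : 𝒢.conv p₂ (fun u => F' (𝒢.kappaT mp u)) (fun u => F (𝒢.kappaT mp u)) t =
      ∑ t₁, ∑ t₂, (if 𝒢.Cnd (p₂ := p₂) t (𝒢.kappaT mp t₂) (𝒢.kappaT mp t₁)
        then F' t₂ * F t₁ else 0) := by
    have hre := reindex (fun a b =>
      if hd : 𝒢.s a.1.2 = 𝒢.r b.1.2 then
        (if b.1.1 = 𝒢.lAct p₂ a.1.1 a.1.2 a.prop.2.2 ∧
            t.1 = (a.1.1, 𝒢.mul a.1.2 b.1.2 hd) then
          F' (𝒢.kappaT mp a) * F (𝒢.kappaT mp b) else 0)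
      else 0)
    refine hre.trans ?_
    refine Finset.sum_congr rfl fun t₁ _ => Finset.sum_congr rfl fun t₂ _ => ?_
    refine (dite_ite_eq _ Iff.rfl).trans ?_
    exact if_congr Iff.rfl (by rw [invol, invol]) rfl
  rw [lhs_eq, rhs_eq]
  refine Finset.sum_congr rfl fun t₁ _ => Finset.sum_congr rfl fun t₂ _ => ?_
  exact if_congr (hiff t₁ t₂) (mul_comm _ _) rfl

end

end Gpd
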